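/- If S is a maximal sum-free set in the elementary abelian 3-group G = (ℤ/3ℤ)^n (n ≥ 1) and x ∈ S, then the set H = x⁻¹S = {x⁻¹s : s ∈ S} is a subgroup of G of index 3, and S = xH is a non-trivial coset of H. -/

import Mathlib

open Pointwise

/-- A subset `S` of an additive group is sum-free if for all `s₁, s₂ ∈ S`, `s₁ + s₂ ∉ S`. -/
def AddSumFree {G : Type*} [AddGroup G] (S : Set G) : Prop :=
  ∀ a ∈ S, ∀ b ∈ S, a + b ∉ S

/-- A maximal sum-free set: a (nonempty) sum-free set of maximum cardinality
among all sum-free subsets. -/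
def IsMaxAddSumFree {G : Type*} [AddGroup G] (S : Set G) : Prop :=
  S.Nonempty ∧ AddSumFree S ∧ ∀ T : Set G, AddSumFree T → T.ncard ≤ S.ncard

section Aux

variable {n : ℕ}

private lemma msf_char (g : Fin n → ZMod 3) : g + g + g = 0 := by
  funext i
  have h : ∀ a : ZMod 3, a + a + a = 0 := by decide
  exact h (g i)

private lemma msf_two_eq_neg (g : Fin n → ZMod 3) : g + g = -g :=
  eq_neg_of_add_eq_zero_left (msf_char g)

private lemma msf_sub_not_mem {S : Set (Fin n → ZMod 3)} (h : AddSumFree S)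
    {a b : Fin n → ZMod 3} (ha : a ∈ S) (hb : b ∈ S) : a - b ∉ S := by
  intro hab
  exact h _ hab _ hb (by simpa using ha)

private lemma msf_ncard_univ : (Set.univ : Set (Fin n → ZMod 3)).ncard = 3 ^ n := by
  rw [Set.ncard_univ, Nat.card_eq_fintype_card, Fintype.card_fun]
  simp [ZMod.card]

private lemma msf_ncard_neg (S : Set (Fin n → ZMod 3)) : (-S).ncard = S.ncard := by
  have : -S = (fun a : Fin n → ZMod 3 => -a) '' S := by
    ext g
    rw [Set.mem_neg]
    constructor
    · intro h; exact ⟨-g, h, neg_neg g⟩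
    · rintro ⟨a, ha, rfl⟩; simpa using ha
  rw [this]
  exact Set.ncard_image_of_injective _ neg_injective

private lemma msf_neg_sumFree {S : Set (Fin n → ZMod 3)} (h : AddSumFree S) :
    AddSumFree (-S) := by
  intro a ha b hb hab
  rw [Set.mem_neg] at ha hb hab
  refine h _ ha _ hb ?_
  rw [show -a + -b = -(a + b) by abel]
  exact hab

private lemma msf_tri_union_ncard {A B C : Set (Fin n → ZMod 3)}
    (hAB : Disjoint A B) (hAC : Disjoint A C) (hBC : Disjoint B C) :
    (A ∪ B ∪ C).ncard = A.ncard + B.ncard + C.ncard := by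
  rw [Set.ncard_union_eq (Set.disjoint_union_left.mpr ⟨hAC, hBC⟩) (Set.toFinite _)
    (Set.toFinite _), Set.ncard_union_eq hAB (Set.toFinite _) (Set.toFinite _)]

private lemma msf_disj {S : Set (Fin n → ZMod 3)} (h : AddSumFree S)
    {s : Fin n → ZMod 3} (hs : s ∈ S) :
    Disjoint S ((-s) +ᵥ S) ∧ Disjoint S ((-s + -s) +ᵥ S) ∧
      Disjoint ((-s) +ᵥ S) ((-s + -s) +ᵥ S) := by
  refine ⟨Set.disjoint_left.mpr ?_, Set.disjoint_left.mpr ?_, Set.disjoint_left.mpr ?_⟩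
  · intro g hg hg'
    rw [Set.mem_vadd_set_iff_neg_vadd_mem, neg_neg, vadd_eq_add] at hg'
    exact h _ hs _ hg hg'
  · intro g hg hg'
    rw [Set.mem_vadd_set_iff_neg_vadd_mem, vadd_eq_add] at hg'
    have he : -(-s + -s) + g = g - s := by
      rw [show -(-s + -s) = s + s by abel, msf_two_eq_neg s]; abel
    rw [he] at hg'
    exact msf_sub_not_mem h hg hs hg'
  · intro g hg hg'
    rw [Set.mem_vadd_set_iff_neg_vadd_mem, neg_neg, vadd_eq_add] at hg
    rw [Set.mem_vadd_set_iff_neg_vadd_mem, vadd_eq_add] at hg'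
    have he : -(-s + -s) + g = (s + g) + s := by abel
    rw [he] at hg'
    exact h _ hg _ hs hg'

private lemma msf_card_le {S : Set (Fin n → ZMod 3)} (h : AddSumFree S)
    {s : Fin n → ZMod 3} (hs : s ∈ S) : 3 * S.ncard ≤ 3 ^ n := by
  obtain ⟨h1, h2, h3⟩ := msf_disj h hs
  have := Set.ncard_le_ncard (Set.subset_univ (S ∪ ((-s) +ᵥ S) ∪ ((-s + -s) +ᵥ S)))
    (Set.toFinite _)
  rw [msf_tri_union_ncard h1 h2 h3, Set.ncard_vadd_set, Set.ncard_vadd_set,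
    msf_ncard_univ] at this
  omega

/-- With maximum cardinality, the three translates cover everything. -/
private lemma msf_cover {S : Set (Fin n → ZMod 3)} (h : AddSumFree S)
    (hcard : 3 * S.ncard = 3 ^ n) {s : Fin n → ZMod 3} (hs : s ∈ S)
    (g : Fin n → ZMod 3) : g ∈ S ∨ s + g ∈ S ∨ (s + s) + g ∈ S := by
  obtain ⟨h1, h2, h3⟩ := msf_disj h hs
  have hU : S ∪ ((-s) +ᵥ S) ∪ ((-s + -s) +ᵥ S) = Set.univ := by
    apply Set.eq_of_subset_of_ncard_le (Set.subset_univ _) _ (Set.toFinite _)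
    rw [msf_tri_union_ncard h1 h2 h3, Set.ncard_vadd_set, Set.ncard_vadd_set,
      msf_ncard_univ]
    omega
  have hg : g ∈ S ∪ ((-s) +ᵥ S) ∪ ((-s + -s) +ᵥ S) := hU ▸ Set.mem_univ g
  rcases hg with (hg | hg) | hg
  · exact Or.inl hg
  · rw [Set.mem_vadd_set_iff_neg_vadd_mem, neg_neg, vadd_eq_add] at hg
    exact Or.inr (Or.inl hg)
  · rw [Set.mem_vadd_set_iff_neg_vadd_mem, vadd_eq_add,
      show -(-s + -s) + g = (s + s) + g by abel] at hg
    exact Or.inr (Or.inr hg)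

/-- The standard example: vectors with first coordinate 1. -/
private lemma msf_exists_big (hn : 1 ≤ n) :
    ∃ T : Set (Fin n → ZMod 3), AddSumFree T ∧ 3 * T.ncard = 3 ^ n := by
  have hn0 : (0 : ℕ) < n := hn
  set i0 : Fin n := ⟨0, hn0⟩
  set F : ZMod 3 → Set (Fin n → ZMod 3) := fun c => {v | v i0 = c} with hF
  refine ⟨F 1, ?_, ?_⟩
  · intro a ha b hb hab
    simp only [hF, Set.mem_setOf_eq, Pi.add_apply] at ha hb hab
    rw [ha, hb] at hab
    exact absurd hab (show ¬ (1 + 1 : ZMod 3) = 1 by decide)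
  · -- each fiber is a translate of `F 1`
    have hcardF : ∀ c : ZMod 3, (F c).ncard = (F 1).ncard := by
      intro c
      have : F c = (fun j => if j = i0 then c - 1 else 0) +ᵥ F 1 := by
        ext v
        rw [Set.mem_vadd_set_iff_neg_vadd_mem, vadd_eq_add]
        simp only [hF, Set.mem_setOf_eq, Pi.add_apply, Pi.neg_apply, if_pos rfl,
          eq_self_iff_true, if_true]
        constructor
        · intro hv; rw [hv]; ring
        · intro hv; linear_combination hv
      rw [this, Set.ncard_vadd_set]
    have hdisj : ∀ c d : ZMod 3, c ≠ d → Disjoint (F c) (F d) := by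
      intro c d hcd
      refine Set.disjoint_left.mpr fun v hv hv' => hcd ?_
      simp only [hF, Set.mem_setOf_eq] at hv hv'
      rw [← hv, ← hv']
    have hcover : F 0 ∪ F 1 ∪ F 2 = Set.univ := by
      ext v
      simp only [hF, Set.mem_union, Set.mem_setOf_eq, Set.mem_univ, iff_true]
      have : ∀ a : ZMod 3, a = 0 ∨ a = 1 ∨ a = 2 := by decide
      rcases this (v i0) with h | h | h
      · exact Or.inl (Or.inl h)
      · exact Or.inl (Or.inr h)
      · exact Or.inr h
    have := msf_tri_union_ncard (hdisj 0 1 (by decide)) (hdisj 0 2 (by decide))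
      (hdisj 1 2 (by decide))
    rw [hcover, msf_ncard_univ, hcardF 0, hcardF 2] at this
    omega

end Aux

/-- If `S` is a maximal sum-free set in `(ℤ/3ℤ)^n` and `x ∈ S`, then `-x + S` is a
subgroup of index 3, and `S` is a non-trivial coset of it. -/
theorem maxSumFree_is_coset_three (n : ℕ) (hn : 1 ≤ n) (S : Set (Fin n → ZMod 3))
    (hS : IsMaxAddSumFree S) (x : Fin n → ZMod 3) (hx : x ∈ S) :
    ∃ H : AddSubgroup (Fin n → ZMod 3),
      (H : Set (Fin n → ZMod 3)) = (-x) +ᵥ S ∧ H.index = 3 ∧ x ∉ H ∧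
        S = x +ᵥ (H : Set (Fin n → ZMod 3)) := by
  obtain ⟨hne, hsf, hmax⟩ := hS
  -- exact cardinality
  have hcard : 3 * S.ncard = 3 ^ n := by
    obtain ⟨T, hT, hTcard⟩ := msf_exists_big hn
    have h1 := msf_card_le hsf hx
    have h2 := hmax T hT
    omega
  -- basic facts
  have hSneg : ∀ a ∈ S, -a ∉ S := by
    intro a ha h
    have he : -a - a = a := by
      rw [show -a - a = -(a + a) by abel, msf_two_eq_neg, neg_neg]
    exact msf_sub_not_mem hsf h ha (by rw [he]; exact ha)
  have hdisjSneg : Disjoint S (-S) := by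
    refine Set.disjoint_left.mpr fun a ha ha' => ?_
    rw [Set.mem_neg] at ha'
    exact hSneg _ ha' (by simpa using ha)
  have hnegsf : AddSumFree (-S) := msf_neg_sumFree hsf
  have hnegcard : 3 * (-S).ncard = 3 ^ n := by rw [msf_ncard_neg]; exact hcard
  -- U = S ∪ -S, R = complement of U
  set U : Set (Fin n → ZMod 3) := S ∪ -S with hUdef
  set R : Set (Fin n → ZMod 3) := Uᶜ with hRdef
  have hUcard : 2 * S.ncard = U.ncard := by
    rw [hUdef, Set.ncard_union_eq hdisjSneg (Set.toFinite _) (Set.toFinite _),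
      msf_ncard_neg]
    ring
  have hRcard : R.ncard = S.ncard := by
    have := Set.ncard_add_ncard_compl U (Set.toFinite _) (Set.toFinite _)
    rw [← hRdef] at this
    rw [Nat.card_eq_fintype_card, Fintype.card_fun] at this
    simp only [ZMod.card, Fintype.card_fin] at this
    omega
  -- key: for r ∈ R and s ∈ S, s + r ∈ U
  have hkey : ∀ r ∈ R, ∀ s ∈ S, s + r ∈ U := by
    intro r hr s hs
    have hrS : r ∉ S := fun h => hr (Or.inl h)
    have hrnS : r ∉ -S := fun h => hr (Or.inr h)
    have c1 := msf_cover hsf hcard hs r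
    have c2 := msf_cover hnegsf hnegcard (Set.neg_mem_neg.mpr hs) r
    rw [show -s + -s = s by rw [← neg_add, msf_two_eq_neg, neg_neg]] at c2
    -- c1 : r ∈ S ∨ s + r ∈ S ∨ s + s + r ∈ S
    -- c2 : r ∈ -S ∨ -s + r ∈ -S ∨ s + r ∈ -S
    rcases c1 with h | h | h
    · exact absurd h hrS
    · exact Or.inl h
    · rcases c2 with h' | h' | h'
      · exact absurd h' hrnS
      · exfalso
        rw [msf_two_eq_neg s] at h
        exact Set.disjoint_left.mp hdisjSneg h h'
      · exact Or.inr h'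
  -- for r ∈ R and u ∈ U, r + u ∈ U
  have hkeyU : ∀ r ∈ R, ∀ u ∈ U, r + u ∈ U := by
    intro r hr u hu
    rcases hu with hu | hu
    · rw [add_comm]; exact hkey r hr u hu
    · rw [Set.mem_neg] at hu
      have := hkey (-r) (by
        intro h
        rcases h with h | h
        · exact hr (Or.inr (Set.mem_neg.mpr (by simpa using h)))
        · exact hr (Or.inl (by rw [Set.mem_neg, neg_neg] at h; exact h))) (-u) hu
      rcases this with h | h
      · exact Or.inr (Set.mem_neg.mpr (by convert h using 1; abel))
      · rw [Set.mem_neg] at h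
        exact Or.inl (by convert h using 1; abel)
  -- hence r + U = U for r ∈ R
  have hvadd : ∀ r ∈ R, r +ᵥ U = U := by
    intro r hr
    apply Set.eq_of_subset_of_ncard_le _ _ (Set.toFinite _)
    · intro g hg
      rw [Set.mem_vadd_set] at hg
      obtain ⟨u, hu, rfl⟩ := hg
      rw [vadd_eq_add]
      exact hkeyU r hr u hu
    · rw [Set.ncard_vadd_set]
  -- R is closed under addition
  have hRadd : ∀ a ∈ R, ∀ b ∈ R, a + b ∈ R := by
    intro a ha b hb
    rw [hRdef, Set.mem_compl_iff]
    intro h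
    rw [← hvadd a ha, Set.mem_vadd_set] at h
    obtain ⟨u, hu, huv⟩ := h
    rw [vadd_eq_add] at huv
    have : u = b := by exact add_left_cancel huv
    exact hb (this ▸ hu)
  have hRneg : ∀ a ∈ R, -a ∈ R := by
    intro a ha h
    apply ha
    rcases h with h | h
    · exact Or.inr (Set.mem_neg.mpr h)
    · rw [Set.mem_neg, neg_neg] at h; exact Or.inl h
  have hR0 : (0 : Fin n → ZMod 3) ∈ R := by
    intro h
    rcases h with h | h
    · exact hsf _ h _ h (by simpa using h)
    · rw [Set.mem_neg, neg_zero] at h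
      exact hsf _ h _ h (by simpa using h)
  -- build the subgroup
  set H : AddSubgroup (Fin n → ZMod 3) :=
    { carrier := R
      zero_mem' := hR0
      add_mem' := fun {a b} ha hb => hRadd a ha b hb
      neg_mem' := fun {a} ha => hRneg a ha } with hHdef
  have hHcoe : (H : Set (Fin n → ZMod 3)) = R := rfl
  have hE : (H : Set (Fin n → ZMod 3)) = (-x) +ᵥ S := by
    rw [hHcoe]
    symm
    apply Set.eq_of_subset_of_ncard_le _ _ (Set.toFinite _)
    · intro g hg
      rw [Set.mem_vadd_set] at hg
      obtain ⟨a, ha, rfl⟩ := hg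
      rw [vadd_eq_add, hRdef, Set.mem_compl_iff]
      intro hmem
      rcases hmem with h | h
      · exact msf_sub_not_mem hsf ha hx (by rw [show a - x = -x + a by abel]; exact h)
      · rw [Set.mem_neg] at h
        exact msf_sub_not_mem hsf hx ha
          (by rw [show x - a = -(-x + a) by abel]; exact h)
    · rw [Set.ncard_vadd_set, hRcard]
  have hkpos : 0 < S.ncard := by
    rw [Set.ncard_pos (Set.toFinite _)]
    exact hne
  have hidx : H.index = 3 := by
    have h1 := AddSubgroup.index_mul_card H
    have h2 : Nat.card H = R.ncard := by
      rw [← Nat.card_coe_set_eq]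
      rfl
    rw [h2, hRcard, Nat.card_eq_fintype_card, Fintype.card_fun] at h1
    simp only [ZMod.card, Fintype.card_fin] at h1
    rw [← hcard] at h1
    exact Nat.eq_of_mul_eq_mul_right hkpos h1
  refine ⟨H, hE, hidx, fun h => h (Or.inl hx), ?_⟩
  rw [hE, vadd_vadd, add_neg_cancel, zero_vadd]
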